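/- For every connected graph G of order n ≥ 4, the eccentric connectivity index ξ^c(G) is at least 3(n-1). -/

import Mathlib

open SimpleGraph Finset

/-- Degree of a vertex (classically decidable adjacency). -/
noncomputable def deg {V : Type*} (G : SimpleGraph V) [Fintype V] (v : V) : ℕ :=
  letI := Classical.decRel G.Adj; G.degree v

/-- Eccentricity of a vertex: maximum distance to any vertex. -/
noncomputable def ecc {V : Type*} (G : SimpleGraph V) [Fintype V] (v : V) : ℕ :=
  Finset.univ.sup (fun w => G.dist v w)

/-- Eccentric connectivity index. -/
noncomputable def eci {V : Type*} (G : SimpleGraph V) [Fintype V] : ℕ :=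
  ∑ v, deg G v * ecc G v

/-- Number of pending vertices (vertices of degree 1). -/
noncomputable def pendingCount {V : Type*} (G : SimpleGraph V) [Fintype V] : ℕ :=
  (Finset.univ.filter (fun v => deg G v = 1)).card

section Aux

variable {n : ℕ} {G : SimpleGraph (Fin n)}

lemma exists_parent (hc : G.Connected) {r v : Fin n} (h : v ≠ r) :
    ∃ w, G.Adj v w ∧ G.dist r w + 1 = G.dist r v := by
  obtain ⟨p, hp⟩ := hc.exists_walk_length_eq_dist v r
  have hnil : ¬ p.Nil := SimpleGraph.Walk.not_nil_of_ne h
  refine ⟨p.getVert 1, p.adj_snd hnil, ?_⟩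
  have h1 : p.tail.length + 1 = p.length := p.length_tail_add_one hnil
  have h2 : G.dist (p.getVert 1) r ≤ p.tail.length := G.dist_le p.tail
  have h3 : G.dist r v ≤ G.dist r (p.getVert 1) + G.dist (p.getVert 1) v :=
    hc.dist_triangle
  have h4 : G.dist (p.getVert 1) v = 1 := by
    rw [G.dist_comm, G.dist_eq_one_iff_adj]
    exact p.adj_snd hnil
  have h5 : G.dist r v = G.dist v r := G.dist_comm
  have h6 : G.dist r (p.getVert 1) = G.dist (p.getVert 1) r := G.dist_comm
  omega

lemma ecc_ge_dist (v w : Fin n) : G.dist v w ≤ ecc G v :=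
  Finset.le_sup (Finset.mem_univ w)

lemma ecc_pos (hc : G.Connected) (hn : 2 ≤ n) (v : Fin n) : 1 ≤ ecc G v := by
  obtain ⟨w, hw⟩ : ∃ w : Fin n, w ≠ v := Fintype.exists_ne_of_one_lt_card (by simp; omega) v
  have h0 : 0 < G.dist v w := hc.pos_dist_of_ne hw.symm
  calc 1 ≤ G.dist v w := h0
    _ ≤ ecc G v := ecc_ge_dist v w

lemma deg_pos (hc : G.Connected) (hn : 2 ≤ n) (v : Fin n) : 1 ≤ deg G v := by
  classical
  obtain ⟨w, hw⟩ : ∃ w : Fin n, w ≠ v := Fintype.exists_ne_of_one_lt_card (by simp; omega) v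
  obtain ⟨u, hu, -⟩ := exists_parent hc (Ne.symm hw)
  unfold deg
  exact (G.degree_pos_iff_exists_adj v).mpr ⟨u, hu⟩

lemma deg_of_ecc_le_one (hc : G.Connected) {v : Fin n} (hv : ecc G v ≤ 1) :
    n - 1 ≤ deg G v := by
  classical
  unfold deg
  have hsub : Finset.univ.erase v ⊆ G.neighborFinset v := by
    intro w hw
    rw [SimpleGraph.mem_neighborFinset, ← G.dist_eq_one_iff_adj]
    have hne : w ≠ v := Finset.ne_of_mem_erase hw
    have h1 : 1 ≤ G.dist v w := hc.pos_dist_of_ne (Ne.symm hne)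
    have h2 : G.dist v w ≤ 1 := le_trans (ecc_ge_dist v w) hv
    omega
  calc n - 1 = (Finset.univ.erase v).card := by
        rw [Finset.card_erase_of_mem (Finset.mem_univ v)]; simp
    _ ≤ (G.neighborFinset v).card := Finset.card_le_card hsub
    _ = G.degree v := rfl

lemma card_edges_lb (hc : G.Connected) (hn : 1 ≤ n) :
    letI := Classical.decRel G.Adj
    n - 1 ≤ G.edgeFinset.card := by
  classical
  let r : Fin n := ⟨0, by omega⟩
  have H : ∀ v : Fin n, v ≠ r → ∃ w, G.Adj v w ∧ G.dist r w + 1 = G.dist r v :=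
    fun v hv => exists_parent hc hv
  choose f hadj hdist using H
  have hcard : (Finset.univ.erase r).card ≤ G.edgeFinset.card := by
    apply Finset.card_le_card_of_injOn
      (f := fun v => if h : v ≠ r then s(v, f v h) else s(r, r))
    · intro v hv
      have hvr : v ≠ r := Finset.ne_of_mem_erase hv
      simp only [dif_pos hvr]
      rw [Finset.mem_coe, SimpleGraph.mem_edgeFinset, SimpleGraph.mem_edgeSet]
      exact hadj v hvr
    · intro a ha b hb hab
      have har : a ≠ r := Finset.ne_of_mem_erase ha
      have hbr : b ≠ r := Finset.ne_of_mem_erase hb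
      simp only [dif_pos har, dif_pos hbr, Sym2.eq_iff] at hab
      rcases hab with ⟨h1, h2⟩ | ⟨h1, h2⟩
      · exact h1
      · exfalso
        have d1 := hdist a har
        have d2 := hdist b hbr
        rw [h2] at d1
        rw [← h1] at d2
        omega
  have : (Finset.univ.erase r).card = n - 1 := by
    rw [Finset.card_erase_of_mem (Finset.mem_univ r)]; simp
  omega

lemma sum_deg_lb (hc : G.Connected) (hn : 1 ≤ n) :
    2 * (n - 1) ≤ ∑ v, deg G v := by
  classical
  have h1 : ∑ v, deg G v = 2 * G.edgeFinset.card := by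
    unfold deg
    convert G.sum_degrees_eq_twice_card_edges using 2
  have h2 := card_edges_lb hc hn
  rw [h1]
  have : (letI := Classical.decRel G.Adj; G.edgeFinset.card) = G.edgeFinset.card := by congr!
  omega

end Aux

theorem stmt0 (n : ℕ) (hn : 4 ≤ n) (G : SimpleGraph (Fin n)) (hc : G.Connected) :
    3 * (n - 1) ≤ eci G := by
  classical
  by_cases hA : ∀ v : Fin n, 2 ≤ ecc G v
  · -- no universal vertex: every eccentricity is at least 2
    have : ∑ v, 2 * deg G v ≤ eci G := by
      unfold eci
      apply Finset.sum_le_sum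
      intro v _
      calc 2 * deg G v = deg G v * 2 := by ring
        _ ≤ deg G v * ecc G v := Nat.mul_le_mul_left _ (hA v)
    have h2 := sum_deg_lb hc (by omega)
    have h3 : ∑ v, 2 * deg G v = 2 * ∑ v, deg G v := by rw [Finset.mul_sum]
    omega
  · push_neg at hA
    obtain ⟨u, hu⟩ := hA
    have hu1 : ecc G u ≤ 1 := by omega
    have hdu : n - 1 ≤ deg G u := deg_of_ecc_le_one hc hu1
    have hue : 1 ≤ ecc G u := ecc_pos hc (by omega) u
    have hcontrib : ∀ v ∈ Finset.univ.erase u, 2 ≤ deg G v * ecc G v := by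
      intro v hv
      by_cases hv2 : 2 ≤ ecc G v
      · have := deg_pos hc (by omega) v
        calc 2 = 1 * 2 := by ring
          _ ≤ deg G v * ecc G v := Nat.mul_le_mul this hv2
      · have hv1 : ecc G v ≤ 1 := by omega
        have := deg_of_ecc_le_one hc hv1
        have hve : 1 ≤ ecc G v := ecc_pos hc (by omega) v
        calc 2 ≤ (n - 1) * 1 := by omega
          _ ≤ deg G v * ecc G v := Nat.mul_le_mul this hve
    have hsum : ∑ v ∈ Finset.univ.erase u, deg G v * ecc G v + deg G u * ecc G u = eci G := by
      unfold eci
      exact Finset.sum_erase_add _ _ (Finset.mem_univ u)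
    have hcard : (Finset.univ.erase u).card = n - 1 := by
      rw [Finset.card_erase_of_mem (Finset.mem_univ u)]; simp
    have hlb : (n - 1) * 2 ≤ ∑ v ∈ Finset.univ.erase u, deg G v * ecc G v := by
      calc (n - 1) * 2 = (Finset.univ.erase u).card * 2 := by rw [hcard]
        _ ≤ ∑ v ∈ Finset.univ.erase u, deg G v * ecc G v := by
            simpa [smul_eq_mul] using
              Finset.card_nsmul_le_sum (Finset.univ.erase u) (fun v => deg G v * ecc G v) 2 hcontrib
    have hlu : n - 1 ≤ deg G u * ecc G u :=
      le_trans hdu (by calc deg G u = deg G u * 1 := by ring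
        _ ≤ deg G u * ecc G u := Nat.mul_le_mul_left _ hue)
    omega
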